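/- For every pair of real parameters α and ã, the map F_{α,ã} : ℝ² → ℝ⁴ defined by F_{α,ã}(u,v) = (x,y,z,τ)(u,v) = (e^{−α}cosh(u)cos(v), e^{−α}sinh(u)sin(v), v, u + (1/2)e^{−2α}cosh²(u)cos²(v) + ã) satisfies the ∂̄_J system on all of ℝ²: (i) ∂_u x − ∂_v y = 0, (ii) ∂_u y + ∂_v x = 0, (iii) ∂_u τ − ∂_v z = x·∂_v y, (iv) ∂_u z + ∂_v τ = x·∂_v x. (This is the two-parameter family, claimed in Section 5.2 of the paper, obtained by gluing two straight-line model solutions at a crossing; the parameter α locates the boundary branch point and ã is the vertical translation.) -/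

import Mathlib

open Real

/-- Partial derivative with respect to the first coordinate `u`. -/
noncomputable def pdu (f : ℝ × ℝ → ℝ) (p : ℝ × ℝ) : ℝ := fderiv ℝ f p (1, 0)

/-- Partial derivative with respect to the second coordinate `v`. -/
noncomputable def pdv (f : ℝ × ℝ → ℝ) (p : ℝ × ℝ) : ℝ := fderiv ℝ f p (0, 1)

/-- The `x`-component of the glued two-parameter family:
`x(u,v) = e^{−α} cosh u · cos v`. -/
noncomputable def glX (α : ℝ) (p : ℝ × ℝ) : ℝ :=
  Real.exp (-α) * Real.cosh p.1 * Real.cos p.2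

/-- The `y`-component of the glued two-parameter family:
`y(u,v) = e^{−α} sinh u · sin v`. -/
noncomputable def glY (α : ℝ) (p : ℝ × ℝ) : ℝ :=
  Real.exp (-α) * Real.sinh p.1 * Real.sin p.2

/-- The `z`-component of the glued two-parameter family: `z(u,v) = v`. -/
noncomputable def glZ (p : ℝ × ℝ) : ℝ := p.2

/-- The `τ`-component of the glued two-parameter family:
`τ(u,v) = u + ½ e^{−2α} cosh²u · cos²v + a₀`. -/
noncomputable def glT (α a₀ : ℝ) (p : ℝ × ℝ) : ℝ :=
  p.1 + (1 / 2) * Real.exp (-(2 * α)) * (Real.cosh p.1) ^ 2 * (Real.cos p.2) ^ 2 + a₀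

lemma hasFDerivAt_sep (f g : ℝ → ℝ) (f' g' : ℝ) (p : ℝ × ℝ)
    (hf : HasDerivAt f f' p.1) (hg : HasDerivAt g g' p.2) :
    HasFDerivAt (fun q : ℝ × ℝ => f q.1 * g q.2)
      (f p.1 • (g' • ContinuousLinearMap.snd ℝ ℝ ℝ) +
        g p.2 • (f' • ContinuousLinearMap.fst ℝ ℝ ℝ)) p := by
  have h1 : HasFDerivAt (fun q : ℝ × ℝ => f q.1)
      (f' • ContinuousLinearMap.fst ℝ ℝ ℝ) p :=
    hf.comp_hasFDerivAt p (hasFDerivAt_fst)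
  have h2 : HasFDerivAt (fun q : ℝ × ℝ => g q.2)
      (g' • ContinuousLinearMap.snd ℝ ℝ ℝ) p :=
    hg.comp_hasFDerivAt p (hasFDerivAt_snd)
  exact h1.mul h2

lemma pd_sep (f g : ℝ → ℝ) (f' g' : ℝ) (p : ℝ × ℝ)
    (hf : HasDerivAt f f' p.1) (hg : HasDerivAt g g' p.2) :
    pdu (fun q : ℝ × ℝ => f q.1 * g q.2) p = f' * g p.2 ∧
    pdv (fun q : ℝ × ℝ => f q.1 * g q.2) p = f p.1 * g' := by
  have h := (hasFDerivAt_sep f g f' g' p hf hg).fderiv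
  constructor <;> simp [pdu, pdv, h] <;> ring

lemma pd_sep_add (f g : ℝ → ℝ) (f' g' : ℝ) (a₀ : ℝ) (p : ℝ × ℝ)
    (hf : HasDerivAt f f' p.1) (hg : HasDerivAt g g' p.2) :
    pdu (fun q : ℝ × ℝ => q.1 + f q.1 * g q.2 + a₀) p = 1 + f' * g p.2 ∧
    pdv (fun q : ℝ × ℝ => q.1 + f q.1 * g q.2 + a₀) p = f p.1 * g' := by
  have h : fderiv ℝ (fun q : ℝ × ℝ => q.1 + f q.1 * g q.2 + a₀) p = _ :=
    (((hasFDerivAt_fst (𝕜 := ℝ) (p := p)).add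
    (hasFDerivAt_sep f g f' g' p hf hg)).add_const a₀).fderiv
  constructor <;> simp only [pdu, pdv, h] <;> simp <;> ring

/-- **The glued two-parameter family (Section 5.2)**: for all real `α, a₀`, the map
`F_{α,a₀}(u,v) = (e^{−α}cosh u cos v, e^{−α}sinh u sin v, v,
u + ½e^{−2α}cosh²u cos²v + a₀)` satisfies the `∂̄_J` system on all of `ℝ²`. -/
theorem glued_family_dbarJ (α a₀ : ℝ) :
    ∀ p : ℝ × ℝ,
      pdu (glX α) p - pdv (glY α) p = 0 ∧
      pdu (glY α) p + pdv (glX α) p = 0 ∧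
      pdu (glT α a₀) p - pdv glZ p = glX α p * pdv (glY α) p ∧
      pdu glZ p + pdv (glT α a₀) p = glX α p * pdv (glX α) p := by
  intro p
  obtain ⟨u, v⟩ := p
  have hX := pd_sep (fun t => Real.exp (-α) * Real.cosh t) Real.cos
    (Real.exp (-α) * Real.sinh u) (-Real.sin v) (u, v)
    ((Real.hasDerivAt_cosh u).const_mul _) (Real.hasDerivAt_cos v)
  have hY := pd_sep (fun t => Real.exp (-α) * Real.sinh t) Real.sin
    (Real.exp (-α) * Real.cosh u) (Real.cos v) (u, v)
    ((Real.hasDerivAt_sinh u).const_mul _) (Real.hasDerivAt_sin v)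
  have hT := pd_sep_add (fun t => 1 / 2 * Real.exp (-(2 * α)) * Real.cosh t ^ 2)
    (fun t => Real.cos t ^ 2)
    (1 / 2 * Real.exp (-(2 * α)) * (2 * Real.cosh u ^ 1 * Real.sinh u))
    (2 * Real.cos v ^ 1 * (-Real.sin v)) a₀ (u, v)
    (((Real.hasDerivAt_cosh u).pow 2).const_mul _)
    ((Real.hasDerivAt_cos v).pow 2)
  have hZ : HasFDerivAt glZ (ContinuousLinearMap.snd ℝ ℝ ℝ) (u, v) := hasFDerivAt_snd
  have hZu : pdu glZ (u, v) = 0 := by simp [pdu, hZ.fderiv]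
  have hZv : pdv glZ (u, v) = 1 := by simp [pdv, hZ.fderiv]
  have hexp : Real.exp (-(2 * α)) = Real.exp (-α) * Real.exp (-α) := by
    rw [← Real.exp_add]; ring_nf
  have hXu : pdu (glX α) (u, v) = Real.exp (-α) * Real.sinh u * Real.cos v := hX.1
  have hXv : pdv (glX α) (u, v) = Real.exp (-α) * Real.cosh u * (-Real.sin v) := hX.2
  have hYu : pdu (glY α) (u, v) = Real.exp (-α) * Real.cosh u * Real.sin v := hY.1
  have hYv : pdv (glY α) (u, v) = Real.exp (-α) * Real.sinh u * Real.cos v := hY.2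
  have hTu : pdu (glT α a₀) (u, v) =
      1 + 1 / 2 * Real.exp (-(2 * α)) * (2 * Real.cosh u ^ 1 * Real.sinh u) * Real.cos v ^ 2 :=
    hT.1
  have hTv : pdv (glT α a₀) (u, v) =
      1 / 2 * Real.exp (-(2 * α)) * Real.cosh u ^ 2 * (2 * Real.cos v ^ 1 * (-Real.sin v)) :=
    hT.2
  refine ⟨by rw [hXu, hYv]; ring, by rw [hYu, hXv]; ring, ?_, ?_⟩
  · rw [hTu, hZv, hYv, hexp]; simp [glX]; ring
  · rw [hTv, hZu, hXv, hexp]; simp [glX]; ring
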